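/- arXiv:2509.11933 — 3 statements merged into one kernel-verified Lean document; each statement's English description precedes it below -/
import Mathlib

section
/- Suppose the iterates u_k, v_k from the monotone iteration are nondecreasing in k and satisfy u_k(r) + v_k(r) ≤ w(r) for all k and r, where w is continuous. Then the pointwise limits u(r) = lim_k u_k(r), v(r) = lim_k v_k(r) exist and satisfy the limit integral equations u(r) = α₀ + ∫₀^r t^{1-n} ∫₀^t s^{n-1} p(s) f(u(s),v(s)) ds dt and v(r) = β₀ + ∫₀^r t^{1-n} ∫₀^t s^{n-1} q(s) g(u(s),v(s)) ds dt. -/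
open MeasureTheory Set Filter Topology intervalIntegral

private lemma aux_primitive {G : ℝ → ℝ}
    (h : ∀ b : ℝ, 0 ≤ b → IntegrableOn G (Icc 0 b)) :
    ContinuousOn (fun r => ∫ t in (0:ℝ)..r, G t) (Ici 0) := by
  intro x hx
  have hx0 : (0:ℝ) ≤ x := hx
  have hb : (0:ℝ) ≤ x + 1 := by linarith
  have h1 : ContinuousOn (fun r => ∫ t in (0:ℝ)..r, G t) (uIcc 0 (x+1)) :=
    intervalIntegral.continuousOn_primitive_interval
      (by rw [uIcc_of_le hb]; exact h _ hb)
  have hmem : x ∈ uIcc (0:ℝ) (x+1) := by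
    rw [uIcc_of_le hb]; exact ⟨hx0, by linarith⟩
  refine (h1 x hmem).mono_of_mem_nhdsWithin ?_
  rw [uIcc_of_le hb]
  exact mem_nhdsWithin.2 ⟨Iio (x+1), isOpen_Iio, by simp, fun y hy => ⟨hy.2, hy.1.le⟩⟩

private lemma meas_restrict {F : ℝ → ℝ} (hF : ContinuousOn F (Ici 0)) {s : Set ℝ}
    (hs : s ⊆ Ici 0) : AEStronglyMeasurable F (volume.restrict s) :=
  (hF.aestronglyMeasurable measurableSet_Ici).mono_measure
    (Measure.restrict_mono hs le_rfl)

private lemma prim_cont {m : ℕ} {h : ℝ → ℝ} (hc : ContinuousOn h (Ici 0)) :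
    ContinuousOn (fun t => ∫ s in (0:ℝ)..t, s ^ m * h s) (Ici 0) := by
  apply aux_primitive
  intro b _
  exact (((continuous_pow m).continuousOn.mul hc).mono Icc_subset_Ici_self).integrableOn_Icc

private lemma key_bound {m : ℕ} (hm : 1 ≤ m) {h : ℝ → ℝ} {C b : ℝ} (hb : 0 ≤ b)
    (hnn : ∀ s ∈ Icc (0:ℝ) b, 0 ≤ h s) (hC : ∀ s ∈ Icc (0:ℝ) b, h s ≤ C)
    (hInt : ∀ t ∈ Icc (0:ℝ) b, IntervalIntegrable (fun s => s ^ m * h s) volume 0 t) :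
    ∀ t ∈ Icc (0:ℝ) b, ‖(∫ s in (0:ℝ)..t, s ^ m * h s) / t ^ m‖ ≤ C * b := by
  have hC0 : 0 ≤ C := le_trans (hnn 0 ⟨le_rfl, hb⟩) (hC 0 ⟨le_rfl, hb⟩)
  intro t ht
  have ht0 : 0 ≤ t := ht.1
  have hsub : Icc (0:ℝ) t ⊆ Icc 0 b := Icc_subset_Icc le_rfl ht.2
  have hI0 : 0 ≤ ∫ s in (0:ℝ)..t, s ^ m * h s :=
    intervalIntegral.integral_nonneg ht0 fun s hs =>
      mul_nonneg (pow_nonneg hs.1 m) (hnn s (hsub hs))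
  have hIle : (∫ s in (0:ℝ)..t, s ^ m * h s) ≤ C * t ^ (m+1) / ((m:ℝ)+1) := by
    have h1 : (∫ s in (0:ℝ)..t, s ^ m * h s) ≤ ∫ s in (0:ℝ)..t, s ^ m * C := by
      apply intervalIntegral.integral_mono_on ht0 (hInt t ht)
        (((continuous_pow m).mul continuous_const).intervalIntegrable 0 t)
      intro s hs
      exact mul_le_mul_of_nonneg_left (hC s (hsub hs)) (pow_nonneg hs.1 m)
    have h2 : (∫ s in (0:ℝ)..t, s ^ m * C) = C * t ^ (m+1) / ((m:ℝ)+1) := by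
      rw [intervalIntegral.integral_mul_const, integral_pow,
        zero_pow (Nat.succ_ne_zero m)]
      ring
    linarith
  rcases eq_or_lt_of_le ht0 with h0 | h0
  · rw [← h0]
    simp only [intervalIntegral.integral_same, zero_div, norm_zero]
    positivity
  · have htm : 0 < t ^ m := pow_pos h0 m
    rw [Real.norm_eq_abs, abs_of_nonneg (div_nonneg hI0 htm.le)]
    have hd : (∫ s in (0:ℝ)..t, s ^ m * h s) / t ^ m ≤ (C * t ^ (m+1) / ((m:ℝ)+1)) / t ^ m := by
      gcongr
    refine hd.trans ?_
    have heq : (C * t ^ (m+1) / ((m:ℝ)+1)) / t ^ m = C * t / ((m:ℝ)+1) := by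
      rw [pow_succ]
      have hm1 : ((m:ℝ)+1) ≠ 0 := by positivity
      field_simp
    rw [heq]
    have h3 : C * t / ((m:ℝ)+1) ≤ C * t := by
      apply div_le_self (mul_nonneg hC0 ht0)
      have : (0:ℝ) ≤ (m:ℝ) := Nat.cast_nonneg m
      linarith
    have h4 : C * t ≤ C * b := mul_le_mul_of_nonneg_left ht.2 hC0
    linarith

private lemma key_cont {m : ℕ} (hm : 1 ≤ m) {h : ℝ → ℝ} (hc : ContinuousOn h (Ici 0))
    (hnn : ∀ s ∈ Ici (0:ℝ), 0 ≤ h s) :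
    ContinuousOn (fun r => ∫ t in (0:ℝ)..r, (∫ s in (0:ℝ)..t, s ^ m * h s) / t ^ m) (Ici 0) := by
  apply aux_primitive
  intro b hb
  obtain ⟨C, hC⟩ := isCompact_Icc.exists_bound_of_continuousOn (hc.mono Icc_subset_Ici_self)
  refine ⟨((meas_restrict (prim_cont hc) Icc_subset_Ici_self).aemeasurable.div
      ((continuous_pow m).aemeasurable.restrict)).aestronglyMeasurable,
    HasFiniteIntegral.restrict_of_bounded (C := C * b) measure_Icc_lt_top ?_⟩
  · refine (ae_restrict_iff' measurableSet_Icc).2 (Eventually.of_forall fun t ht => ?_)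
    refine key_bound hm hb (fun s hs => hnn s hs.1) (fun s hs => (le_abs_self _).trans (hC s hs))
      (fun t' ht' => ?_) t ht
    apply ContinuousOn.intervalIntegrable
    refine ((continuous_pow m).continuousOn.mul hc).mono ?_
    rw [uIcc_of_le ht'.1]
    exact Icc_subset_Ici_self

theorem stmt10 (n : ℕ) (hn : 3 ≤ n) (α₀ β₀ : ℝ) (hα₀ : 0 < α₀) (hβ₀ : 0 < β₀)
    (p q : ℝ → ℝ)
    (hp_cont : ContinuousOn p (Ici 0)) (hq_cont : ContinuousOn q (Ici 0))
    (hp_nonneg : ∀ r ∈ Ici (0:ℝ), 0 ≤ p r) (hq_nonneg : ∀ r ∈ Ici (0:ℝ), 0 ≤ q r)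
    (f g : ℝ → ℝ → ℝ)
    (hf_cont : Continuous fun x : ℝ × ℝ => f x.1 x.2)
    (hg_cont : Continuous fun x : ℝ × ℝ => g x.1 x.2)
    (hf_nonneg : ∀ s t : ℝ, 0 ≤ s → 0 ≤ t → 0 ≤ f s t)
    (hg_nonneg : ∀ s t : ℝ, 0 ≤ s → 0 ≤ t → 0 ≤ g s t)
    (hf_mono : ∀ s t s' t' : ℝ, 0 ≤ s → 0 ≤ t → s ≤ s' → t ≤ t' → f s t ≤ f s' t')
    (hg_mono : ∀ s t s' t' : ℝ, 0 ≤ s → 0 ≤ t → s ≤ s' → t ≤ t' → g s t ≤ g s' t')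
    (uk vk : ℕ → ℝ → ℝ)
    (hu0 : ∀ r, uk 0 r = α₀) (hv0 : ∀ r, vk 0 r = β₀)
    (huk : ∀ k r, uk (k + 1) r = α₀ +
      ∫ t in (0:ℝ)..r, (∫ s in (0:ℝ)..t, s ^ (n - 1) * p s * f (uk k s) (vk k s)) / t ^ (n - 1))
    (hvk : ∀ k r, vk (k + 1) r = β₀ +
      ∫ t in (0:ℝ)..r, (∫ s in (0:ℝ)..t, s ^ (n - 1) * q s * g (uk k s) (vk k s)) / t ^ (n - 1))
    (hmono_u : ∀ r : ℝ, 0 ≤ r → Monotone fun k => uk k r)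
    (hmono_v : ∀ r : ℝ, 0 ≤ r → Monotone fun k => vk k r)
    (w : ℝ → ℝ) (hw_cont : Continuous w)
    (hbound : ∀ k : ℕ, ∀ r : ℝ, 0 ≤ r → uk k r + vk k r ≤ w r) :
    ∃ u v : ℝ → ℝ,
      (∀ r : ℝ, 0 ≤ r → Tendsto (fun k => uk k r) atTop (𝓝 (u r))) ∧
      (∀ r : ℝ, 0 ≤ r → Tendsto (fun k => vk k r) atTop (𝓝 (v r))) ∧
      (∀ r : ℝ, 0 ≤ r → u r = α₀ +
        ∫ t in (0:ℝ)..r, (∫ s in (0:ℝ)..t, s ^ (n - 1) * p s * f (u s) (v s)) / t ^ (n - 1)) ∧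
      (∀ r : ℝ, 0 ≤ r → v r = β₀ +
        ∫ t in (0:ℝ)..r, (∫ s in (0:ℝ)..t, s ^ (n - 1) * q s * g (u s) (v s)) / t ^ (n - 1)) := by
  set m := n - 1 with hmdef
  have hm : 1 ≤ m := by omega
  have hvk_lb : ∀ k s, 0 ≤ s → β₀ ≤ vk k s := fun k s hs => by
    simpa [hv0] using hmono_v s hs (Nat.zero_le k)
  have huk_lb : ∀ k s, 0 ≤ s → α₀ ≤ uk k s := fun k s hs => by
    simpa [hu0] using hmono_u s hs (Nat.zero_le k)
  have huk_ub : ∀ k s, 0 ≤ s → uk k s ≤ w s := fun k s hs => by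
    have h1 := hbound k s hs; have h2 := hvk_lb k s hs; linarith
  have hvk_ub : ∀ k s, 0 ≤ s → vk k s ≤ w s := fun k s hs => by
    have h1 := hbound k s hs; have h2 := huk_lb k s hs; linarith
  have hbdd_u : ∀ s, 0 ≤ s → BddAbove (range fun k => uk k s) := fun s hs =>
    ⟨w s, by rintro x ⟨k, rfl⟩; exact huk_ub k s hs⟩
  have hbdd_v : ∀ s, 0 ≤ s → BddAbove (range fun k => vk k s) := fun s hs =>
    ⟨w s, by rintro x ⟨k, rfl⟩; exact hvk_ub k s hs⟩
  set u : ℝ → ℝ := fun s => ⨆ k, uk k s with hu_def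
  set v : ℝ → ℝ := fun s => ⨆ k, vk k s with hv_def
  have hu_tend : ∀ s : ℝ, 0 ≤ s → Tendsto (fun k => uk k s) atTop (𝓝 (u s)) :=
    fun s hs => tendsto_atTop_ciSup (hmono_u s hs) (hbdd_u s hs)
  have hv_tend : ∀ s : ℝ, 0 ≤ s → Tendsto (fun k => vk k s) atTop (𝓝 (v s)) :=
    fun s hs => tendsto_atTop_ciSup (hmono_v s hs) (hbdd_v s hs)
  have hu_lb : ∀ s : ℝ, 0 ≤ s → α₀ ≤ u s := fun s hs =>
    (hu0 s).ge.trans (le_ciSup (hbdd_u s hs) 0)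
  have hv_lb : ∀ s : ℝ, 0 ≤ s → β₀ ≤ v s := fun s hs =>
    (hv0 s).ge.trans (le_ciSup (hbdd_v s hs) 0)
  have hu_ub : ∀ s : ℝ, 0 ≤ s → u s ≤ w s := fun s hs => ciSup_le fun k => huk_ub k s hs
  have hv_ub : ∀ s : ℝ, 0 ≤ s → v s ≤ w s := fun s hs => ciSup_le fun k => hvk_ub k s hs
  have hcontk : ∀ k, ContinuousOn (uk k) (Ici 0) ∧ ContinuousOn (vk k) (Ici 0) := by
    intro k
    induction k with
    | zero =>
      exact ⟨continuousOn_const.congr fun r _ => hu0 r,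
        continuousOn_const.congr fun r _ => hv0 r⟩
    | succ k ih =>
      have hfc : ContinuousOn (fun s => p s * f (uk k s) (vk k s)) (Ici 0) :=
        hp_cont.mul (hf_cont.comp_continuousOn (f := fun s => (uk k s, vk k s)) (ih.1.prodMk ih.2))
      have hgc : ContinuousOn (fun s => q s * g (uk k s) (vk k s)) (Ici 0) :=
        hq_cont.mul (hg_cont.comp_continuousOn (f := fun s => (uk k s, vk k s)) (ih.1.prodMk ih.2))
      have hfnn : ∀ s ∈ Ici (0:ℝ), 0 ≤ p s * f (uk k s) (vk k s) := fun s hs =>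
        mul_nonneg (hp_nonneg s hs)
          (hf_nonneg _ _ (hα₀.le.trans (huk_lb k s hs)) (hβ₀.le.trans (hvk_lb k s hs)))
      have hgnn : ∀ s ∈ Ici (0:ℝ), 0 ≤ q s * g (uk k s) (vk k s) := fun s hs =>
        mul_nonneg (hq_nonneg s hs)
          (hg_nonneg _ _ (hα₀.le.trans (huk_lb k s hs)) (hβ₀.le.trans (hvk_lb k s hs)))
      constructor
      · have h2 : ContinuousOn (fun r : ℝ => α₀ +
            ∫ t in (0:ℝ)..r, (∫ s in (0:ℝ)..t, s ^ m * (p s * f (uk k s) (vk k s))) / t ^ m)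
            (Ici 0) := continuousOn_const.add (key_cont hm hfc hfnn)
        exact h2.congr fun r hr => by rw [huk]; simp only [mul_assoc]
      · have h2 : ContinuousOn (fun r : ℝ => β₀ +
            ∫ t in (0:ℝ)..r, (∫ s in (0:ℝ)..t, s ^ m * (q s * g (uk k s) (vk k s))) / t ^ m)
            (Ici 0) := continuousOn_const.add (key_cont hm hgc hgnn)
        exact h2.congr fun r hr => by rw [hvk]; simp only [mul_assoc]
  have MAIN : ∀ (γ : ℝ) (P : ℝ → ℝ) (F : ℝ → ℝ → ℝ) (xk : ℕ → ℝ → ℝ) (x : ℝ → ℝ),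
      ContinuousOn P (Ici 0) → (∀ s ∈ Ici (0:ℝ), 0 ≤ P s) →
      Continuous (fun y : ℝ × ℝ => F y.1 y.2) →
      (∀ a b : ℝ, 0 ≤ a → 0 ≤ b → 0 ≤ F a b) →
      (∀ a b a' b' : ℝ, 0 ≤ a → 0 ≤ b → a ≤ a' → b ≤ b' → F a b ≤ F a' b') →
      (∀ k r, xk (k+1) r = γ +
        ∫ t in (0:ℝ)..r, (∫ s in (0:ℝ)..t, s ^ m * (P s * F (uk k s) (vk k s))) / t ^ m) →
      (∀ r : ℝ, 0 ≤ r → Tendsto (fun k => xk k r) atTop (𝓝 (x r))) →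
      ∀ r : ℝ, 0 ≤ r → x r = γ +
        ∫ t in (0:ℝ)..r, (∫ s in (0:ℝ)..t, s ^ m * (P s * F (u s) (v s))) / t ^ m := by
    intro γ P F xk x hPc hPnn hFc hFnn hFmono hxk hx_tend r hr
    obtain ⟨Cp, hCp⟩ := isCompact_Icc.exists_bound_of_continuousOn
      (hPc.mono (Icc_subset_Ici_self : Icc (0:ℝ) r ⊆ _))
    obtain ⟨W, hW⟩ := isCompact_Icc.exists_bound_of_continuousOn
      (hw_cont.continuousOn : ContinuousOn w (Icc (0:ℝ) r))
    set C := Cp * F W W with hCdef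
    have hCp0 : 0 ≤ Cp := (norm_nonneg _).trans (hCp 0 ⟨le_rfl, hr⟩)
    have hPle : ∀ s ∈ Icc (0:ℝ) r, P s ≤ Cp := fun s hs => (le_abs_self _).trans (hCp s hs)
    have hwle : ∀ s ∈ Icc (0:ℝ) r, w s ≤ W := fun s hs => (le_abs_self _).trans (hW s hs)
    have hbk : ∀ k, ∀ s ∈ Icc (0:ℝ) r,
        0 ≤ P s * F (uk k s) (vk k s) ∧ P s * F (uk k s) (vk k s) ≤ C := by
      intro k s hs
      have hs0 : (0:ℝ) ≤ s := hs.1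
      have h1 : 0 ≤ uk k s := hα₀.le.trans (huk_lb k s hs0)
      have h2 : 0 ≤ vk k s := hβ₀.le.trans (hvk_lb k s hs0)
      have h3 : uk k s ≤ W := (huk_ub k s hs0).trans (hwle s hs)
      have h4 : vk k s ≤ W := (hvk_ub k s hs0).trans (hwle s hs)
      exact ⟨mul_nonneg (hPnn s hs0) (hFnn _ _ h1 h2),
        mul_le_mul (hPle s hs) (hFmono _ _ _ _ h1 h2 h3 h4) (hFnn _ _ h1 h2) hCp0⟩
    have hbinf : ∀ s ∈ Icc (0:ℝ) r,
        0 ≤ P s * F (u s) (v s) ∧ P s * F (u s) (v s) ≤ C := by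
      intro s hs
      have hs0 : (0:ℝ) ≤ s := hs.1
      have h1 : 0 ≤ u s := hα₀.le.trans (hu_lb s hs0)
      have h2 : 0 ≤ v s := hβ₀.le.trans (hv_lb s hs0)
      have h3 : u s ≤ W := (hu_ub s hs0).trans (hwle s hs)
      have h4 : v s ≤ W := (hv_ub s hs0).trans (hwle s hs)
      exact ⟨mul_nonneg (hPnn s hs0) (hFnn _ _ h1 h2),
        mul_le_mul (hPle s hs) (hFmono _ _ _ _ h1 h2 h3 h4) (hFnn _ _ h1 h2) hCp0⟩
    have hkcont : ∀ k, ContinuousOn (fun s => P s * F (uk k s) (vk k s)) (Ici 0) :=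
      fun k => hPc.mul (hFc.comp_continuousOn (f := fun s => (uk k s, vk k s)) ((hcontk k).1.prodMk (hcontk k).2))
    have hInner : ∀ t ∈ Ioc (0:ℝ) r,
        Tendsto (fun k => ∫ s in (0:ℝ)..t, s ^ m * (P s * F (uk k s) (vk k s))) atTop
          (𝓝 (∫ s in (0:ℝ)..t, s ^ m * (P s * F (u s) (v s)))) := by
      intro t ht
      have ht0 : (0:ℝ) ≤ t := ht.1.le
      have hsub : uIoc (0:ℝ) t ⊆ Ici 0 := by
        rw [uIoc_of_le ht0]; exact Ioc_subset_Icc_self.trans Icc_subset_Ici_self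
      apply intervalIntegral.tendsto_integral_filter_of_dominated_convergence
        (bound := fun s => s ^ m * C)
      · exact Eventually.of_forall fun k =>
          meas_restrict ((continuous_pow m).continuousOn.mul (hkcont k)) hsub
      · refine Eventually.of_forall fun k => Eventually.of_forall fun s hs => ?_
        rw [uIoc_of_le ht0] at hs
        have hsIcc : s ∈ Icc (0:ℝ) r := ⟨hs.1.le, hs.2.trans ht.2⟩
        have hb := hbk k s hsIcc
        rw [Real.norm_eq_abs, abs_of_nonneg (mul_nonneg (pow_nonneg hs.1.le m) hb.1)]
        exact mul_le_mul_of_nonneg_left hb.2 (pow_nonneg hs.1.le m)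
      · exact ((continuous_pow m).mul continuous_const).intervalIntegrable 0 t
      · refine Eventually.of_forall fun s hs => ?_
        rw [uIoc_of_le ht0] at hs
        have hs0 : (0:ℝ) ≤ s := hs.1.le
        have h1 : Tendsto (fun k => (uk k s, vk k s)) atTop (𝓝 (u s, v s)) :=
          (hu_tend s hs0).prodMk_nhds (hv_tend s hs0)
        have h2 : Tendsto (fun k => F (uk k s) (vk k s)) atTop (𝓝 (F (u s) (v s))) :=
          (hFc.tendsto (u s, v s)).comp h1
        exact tendsto_const_nhds.mul h2 |>.const_mul _
      -- note: careful about the shape of the tendsto goal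
    have hsubr : uIoc (0:ℝ) r ⊆ Ici 0 := by
      rw [uIoc_of_le hr]; exact Ioc_subset_Icc_self.trans Icc_subset_Ici_self
    have hOuter : Tendsto
        (fun k => ∫ t in (0:ℝ)..r, (∫ s in (0:ℝ)..t, s ^ m * (P s * F (uk k s) (vk k s))) / t ^ m)
        atTop (𝓝 (∫ t in (0:ℝ)..r, (∫ s in (0:ℝ)..t, s ^ m * (P s * F (u s) (v s))) / t ^ m)) := by
      apply intervalIntegral.tendsto_integral_filter_of_dominated_convergence
        (bound := fun _ => C * r)
      · refine Eventually.of_forall fun k => ?_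
        exact ((meas_restrict (prim_cont (hkcont k)) hsubr).aemeasurable.div
          ((continuous_pow m).aemeasurable.restrict)).aestronglyMeasurable
      · refine Eventually.of_forall fun k => Eventually.of_forall fun t ht => ?_
        rw [uIoc_of_le hr] at ht
        refine key_bound hm hr (fun s hs => (hbk k s hs).1) (fun s hs => (hbk k s hs).2)
          (fun t' ht' => ?_) t ⟨ht.1.le, ht.2⟩
        apply ContinuousOn.intervalIntegrable
        refine ((continuous_pow m).continuousOn.mul (hkcont k)).mono ?_
        rw [uIcc_of_le ht'.1]
        exact Icc_subset_Ici_self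
      · exact intervalIntegrable_const
      · refine Eventually.of_forall fun t ht => ?_
        rw [uIoc_of_le hr] at ht
        exact (hInner t ht).div_const _
    have lim1 : Tendsto (fun k => xk (k+1) r) atTop (𝓝 (x r)) :=
      (hx_tend r hr).comp (tendsto_add_atTop_nat 1)
    have lim2 : Tendsto (fun k => xk (k+1) r) atTop
        (𝓝 (γ + ∫ t in (0:ℝ)..r, (∫ s in (0:ℝ)..t, s ^ m * (P s * F (u s) (v s))) / t ^ m)) := by
      simp only [hxk]
      exact tendsto_const_nhds.add hOuter
    exact tendsto_nhds_unique lim1 lim2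
  refine ⟨u, v, hu_tend, hv_tend, ?_, ?_⟩
  · intro r hr
    have h := MAIN α₀ p f uk u hp_cont hp_nonneg hf_cont hf_nonneg hf_mono
      (fun k r => by rw [huk]; simp only [mul_assoc]) hu_tend r hr
    simpa only [mul_assoc] using h
  · intro r hr
    have h := MAIN β₀ q g vk v hq_cont hq_nonneg hg_cont hg_nonneg hg_mono
      (fun k r => by rw [hvk]; simp only [mul_assoc]) hv_tend r hr
    simpa only [mul_assoc] using h
end

section
/- The set 𝒢 of central values (α,β) ∈ (0,∞)² for which the system admits a positive entire radial solution with u(0)=α, v(0)=β is downward closed: if (α₀,β₀) ∈ 𝒢 and 0 < α ≤ α₀, 0 < β ≤ β₀, then (α,β) ∈ 𝒢. -/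
set_option maxHeartbeats 1000000

open MeasureTheory Set Filter Topology intervalIntegral

noncomputable def primK (m : ℕ) (c : ℝ → ℝ) (t : ℝ) : ℝ := ∫ s in (0:ℝ)..t, s ^ m * c s

noncomputable def primH (m : ℕ) (c : ℝ → ℝ) (t : ℝ) : ℝ := primK m c t / t ^ m

noncomputable def primOp (m : ℕ) (c : ℝ → ℝ) (r : ℝ) : ℝ := ∫ t in (0:ℝ)..r, primH m c t

lemma primK_abs_le {m : ℕ} {c : ℝ → ℝ} {t M : ℝ} (ht : 0 ≤ t)
    (hb : ∀ s ∈ Icc 0 t, |c s| ≤ M) : |primK m c t| ≤ t ^ m * M * t := by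
  have := intervalIntegral.norm_integral_le_of_norm_le_const (C := t ^ m * M)
    (f := fun s => s ^ m * c s) (a := (0:ℝ)) (b := t) ?_
  · simpa [primK, abs_of_nonneg ht] using this
  · intro x hx
    rw [uIoc_of_le ht] at hx
    have hx0 : 0 < x := hx.1
    have hxt : x ≤ t := hx.2
    have h1 : |x ^ m * c x| = x ^ m * |c x| := by
      rw [abs_mul, abs_of_nonneg (by positivity)]
    rw [Real.norm_eq_abs, h1]
    have hM : |c x| ≤ M := hb x ⟨hx0.le, hxt⟩
    have : x ^ m ≤ t ^ m := pow_le_pow_left₀ hx0.le hxt m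
    have h0 : (0:ℝ) ≤ |c x| := abs_nonneg _
    nlinarith [pow_nonneg hx0.le m]

lemma primH_abs_le {m : ℕ} (hm : 1 ≤ m) {c : ℝ → ℝ} {t r M : ℝ} (ht : 0 ≤ t) (htr : t ≤ r)
    (hM : 0 ≤ M) (hb : ∀ s ∈ Icc 0 r, |c s| ≤ M) : |primH m c t| ≤ M * r := by
  rcases eq_or_lt_of_le ht with h | h
  · have hr : (0:ℝ) ≤ r := h ▸ htr
    simp [primH, primK, ← h, zero_pow (by omega : m ≠ 0)]
    positivity
  · have hb' : ∀ s ∈ Icc 0 t, |c s| ≤ M := fun s hs => hb s ⟨hs.1, hs.2.trans htr⟩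
    have h1 := primK_abs_le (m := m) ht hb'
    have htm : (0:ℝ) < t ^ m := by positivity
    rw [primH, abs_div, abs_of_nonneg htm.le, div_le_iff₀ htm]
    calc |primK m c t| ≤ t ^ m * M * t := h1
      _ ≤ M * r * t ^ m := by nlinarith [mul_le_mul_of_nonneg_left htr (mul_nonneg htm.le hM)]

lemma primH_nonneg {m : ℕ} {c : ℝ → ℝ} {t : ℝ} (ht : 0 ≤ t)
    (hc : ∀ s ∈ Icc 0 t, 0 ≤ c s) : 0 ≤ primH m c t := by
  have hK : 0 ≤ primK m c t := by
    apply intervalIntegral.integral_nonneg ht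
    intro s hs
    exact mul_nonneg (pow_nonneg hs.1 m) (hc s hs)
  exact div_nonneg hK (by positivity)

lemma primOp_nonneg {m : ℕ} {c : ℝ → ℝ} {r : ℝ} (hr : 0 ≤ r)
    (hc : ∀ s ∈ Icc 0 r, 0 ≤ c s) : 0 ≤ primOp m c r := by
  apply intervalIntegral.integral_nonneg hr
  intro t htt
  exact primH_nonneg htt.1 (fun s hs => hc s ⟨hs.1, hs.2.trans htt.2⟩)

-- integrability of the inner integrand on [0, r]
lemma inner_integrableOn {m : ℕ} {c : ℝ → ℝ} {r M : ℝ} (hr : 0 ≤ r)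
    (hmeas : AEStronglyMeasurable c (volume.restrict (Icc 0 r)))
    (hb : ∀ s ∈ Icc 0 r, |c s| ≤ M) :
    IntegrableOn (fun s => s ^ m * c s) (Icc 0 r) := by
  constructor
  · exact (((continuous_pow m).aestronglyMeasurable).restrict).mul hmeas
  · apply MeasureTheory.HasFiniteIntegral.restrict_of_bounded (C := r ^ m * M)
      (measure_Icc_lt_top)
    filter_upwards [ae_restrict_mem measurableSet_Icc] with s hs
    rw [Real.norm_eq_abs, abs_mul, abs_of_nonneg (pow_nonneg hs.1 m)]
    have h1 : s ^ m ≤ r ^ m := pow_le_pow_left₀ hs.1 hs.2 m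
    have h2 : |c s| ≤ M := hb s hs
    nlinarith [pow_nonneg hs.1 m, abs_nonneg (c s)]

-- continuity of primK on Icc 0 r, as a set-integral identity
lemma primK_contOn {m : ℕ} {c : ℝ → ℝ} {r M : ℝ} (hr : 0 ≤ r)
    (hmeas : AEStronglyMeasurable c (volume.restrict (Icc 0 r)))
    (hb : ∀ s ∈ Icc 0 r, |c s| ≤ M) :
    ContinuousOn (primK m c) (Icc 0 r) := by
  have h := intervalIntegral.continuousOn_primitive (f := fun s => s ^ m * c s)
    (a := 0) (b := r) (μ := volume) (inner_integrableOn hr hmeas hb)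
  apply h.congr
  intro t htt
  rw [primK, intervalIntegral.integral_of_le htt.1]

lemma primH_aesm {m : ℕ} {c : ℝ → ℝ} {r M : ℝ} (hr : 0 ≤ r)
    (hmeas : AEStronglyMeasurable c (volume.restrict (Icc 0 r)))
    (hb : ∀ s ∈ Icc 0 r, |c s| ≤ M) :
    AEStronglyMeasurable (primH m c) (volume.restrict (Icc 0 r)) := by
  have h1 : AEStronglyMeasurable (primK m c) (volume.restrict (Icc 0 r)) :=
    (primK_contOn hr hmeas hb).aestronglyMeasurable measurableSet_Icc
  have h2 : AEStronglyMeasurable (fun t : ℝ => t ^ m) (volume.restrict (Icc 0 r)) :=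
    ((continuous_pow m).aestronglyMeasurable).restrict
  exact (h1.aemeasurable.div h2.aemeasurable).aestronglyMeasurable

lemma primH_integrableOn {m : ℕ} (hm : 1 ≤ m) {c : ℝ → ℝ} {r M : ℝ} (hr : 0 ≤ r) (hM : 0 ≤ M)
    (hmeas : AEStronglyMeasurable c (volume.restrict (Icc 0 r)))
    (hb : ∀ s ∈ Icc 0 r, |c s| ≤ M) :
    IntegrableOn (primH m c) (Icc 0 r) := by
  constructor
  · exact primH_aesm hr hmeas hb
  · apply MeasureTheory.HasFiniteIntegral.restrict_of_bounded (C := M * r) measure_Icc_lt_top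
    filter_upwards [ae_restrict_mem measurableSet_Icc] with t htt
    rw [Real.norm_eq_abs]
    exact primH_abs_le hm htt.1 htt.2 hM hb

lemma primOp_contOn {m : ℕ} (hm : 1 ≤ m) {c : ℝ → ℝ}
    (hmeas : ∀ r : ℝ, 0 ≤ r → AEStronglyMeasurable c (volume.restrict (Icc 0 r)))
    (hbdd : ∀ r : ℝ, 0 ≤ r → ∃ M, 0 ≤ M ∧ ∀ s ∈ Icc 0 r, |c s| ≤ M) :
    ContinuousOn (primOp m c) (Ici 0) := by
  intro x hx
  have hx0 : (0:ℝ) ≤ x := hx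
  have hr : (0:ℝ) ≤ x + 1 := by linarith
  obtain ⟨M, hM0, hM⟩ := hbdd (x + 1) hr
  have hint : IntegrableOn (primH m c) (Icc 0 (x+1)) :=
    primH_integrableOn hm hr hM0 (hmeas _ hr) hM
  have h1 : ContinuousOn (primOp m c) (Icc 0 (x+1)) := by
    have := intervalIntegral.continuousOn_primitive_interval (a := (0:ℝ)) (b := x+1)
      (μ := volume) (f := primH m c) (by rwa [uIcc_of_le hr])
    rwa [uIcc_of_le hr] at this
  have hcw : ContinuousWithinAt (primOp m c) (Icc 0 (x+1)) x :=
    h1 x ⟨hx0, by linarith⟩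
  apply hcw.mono_of_mem_nhdsWithin
  rw [mem_nhdsWithin]
  exact ⟨Iio (x+1), isOpen_Iio, by simp, fun y hy => ⟨hy.2, hy.1.le⟩⟩

lemma primOp_mono {m : ℕ} (hm : 1 ≤ m) {c₁ c₂ : ℝ → ℝ} {r M₁ M₂ : ℝ} (hr : 0 ≤ r)
    (hmeas₁ : AEStronglyMeasurable c₁ (volume.restrict (Icc 0 r)))
    (hmeas₂ : AEStronglyMeasurable c₂ (volume.restrict (Icc 0 r)))
    (hM₁0 : 0 ≤ M₁) (hM₂0 : 0 ≤ M₂)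
    (hb₁ : ∀ s ∈ Icc 0 r, |c₁ s| ≤ M₁) (hb₂ : ∀ s ∈ Icc 0 r, |c₂ s| ≤ M₂)
    (hle : ∀ s ∈ Icc 0 r, c₁ s ≤ c₂ s) :
    primOp m c₁ r ≤ primOp m c₂ r := by
  apply intervalIntegral.integral_mono_on hr
  · rw [intervalIntegrable_iff_integrableOn_Ioc_of_le hr]
    exact (primH_integrableOn hm hr hM₁0 hmeas₁ hb₁).mono_set Ioc_subset_Icc_self
  · rw [intervalIntegrable_iff_integrableOn_Ioc_of_le hr]
    exact (primH_integrableOn hm hr hM₂0 hmeas₂ hb₂).mono_set Ioc_subset_Icc_self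
  · intro t htt
    have hK : primK m c₁ t ≤ primK m c₂ t := by
      apply intervalIntegral.integral_mono_on htt.1
      · rw [intervalIntegrable_iff_integrableOn_Ioc_of_le htt.1]
        exact (inner_integrableOn hr hmeas₁ hb₁).mono_set
          ((Ioc_subset_Icc_self).trans (Icc_subset_Icc le_rfl htt.2))
      · rw [intervalIntegrable_iff_integrableOn_Ioc_of_le htt.1]
        exact (inner_integrableOn hr hmeas₂ hb₂).mono_set
          ((Ioc_subset_Icc_self).trans (Icc_subset_Icc le_rfl htt.2))
      · intro s hs
        exact mul_le_mul_of_nonneg_left (hle s ⟨hs.1, hs.2.trans htt.2⟩) (pow_nonneg hs.1 m)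
    rcases eq_or_lt_of_le htt.1 with h0 | h0
    · simp [primH, ← h0, zero_pow (by omega : m ≠ 0)]
    · exact (div_le_div_iff_of_pos_right (by positivity)).2 hK

lemma primOp_tendsto {m : ℕ} (hm : 1 ≤ m) {c : ℕ → ℝ → ℝ} {cL : ℝ → ℝ} {r M : ℝ}
    (hr : 0 ≤ r) (hM : 0 ≤ M)
    (hmeas : ∀ k, AEStronglyMeasurable (c k) (volume.restrict (Icc 0 r)))
    (hmeasL : AEStronglyMeasurable cL (volume.restrict (Icc 0 r)))
    (hb : ∀ k, ∀ s ∈ Icc 0 r, |c k s| ≤ M)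
    (hbL : ∀ s ∈ Icc 0 r, |cL s| ≤ M)
    (hlim : ∀ s ∈ Icc 0 r, Tendsto (fun k => c k s) atTop (𝓝 (cL s))) :
    Tendsto (fun k => primOp m (c k) r) atTop (𝓝 (primOp m cL r)) := by
  have hK : ∀ t ∈ Icc (0:ℝ) r,
      Tendsto (fun k => primK m (c k) t) atTop (𝓝 (primK m cL t)) := by
    intro t htt
    have hle : volume.restrict (Ioc (0:ℝ) t) ≤ volume.restrict (Icc 0 r) :=
      Measure.restrict_mono ((Ioc_subset_Icc_self).trans (Icc_subset_Icc le_rfl htt.2)) le_rfl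
    have h := MeasureTheory.tendsto_integral_of_dominated_convergence
      (μ := volume.restrict (Ioc (0:ℝ) t))
      (F := fun k s => s ^ m * c k s) (f := fun s => s ^ m * cL s)
      (bound := fun _ => r ^ m * M)
      (fun k => (((continuous_pow m).aestronglyMeasurable).restrict).mul
        ((hmeas k).mono_measure hle))
      (integrableOn_const measure_Ioc_lt_top.ne)
      (fun k => by
        filter_upwards [ae_restrict_mem measurableSet_Ioc] with s hs
        have h1 : s ^ m ≤ r ^ m := pow_le_pow_left₀ hs.1.le (hs.2.trans htt.2) m
        have h2 : |c k s| ≤ M := hb k s ⟨hs.1.le, hs.2.trans htt.2⟩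
        rw [Real.norm_eq_abs, abs_mul, abs_of_nonneg (pow_nonneg hs.1.le m)]
        nlinarith [pow_nonneg hs.1.le m, abs_nonneg (c k s)])
      (by
        filter_upwards [ae_restrict_mem measurableSet_Ioc] with s hs
        exact (hlim s ⟨hs.1.le, hs.2.trans htt.2⟩).const_mul (s ^ m))
    have heq : ∀ d : ℝ → ℝ, primK m d t = ∫ s in Ioc (0:ℝ) t, s ^ m * d s := by
      intro d
      rw [primK, intervalIntegral.integral_of_le htt.1]
    simp_rw [heq]
    exact h
  have hH : ∀ t ∈ Icc (0:ℝ) r,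
      Tendsto (fun k => primH m (c k) t) atTop (𝓝 (primH m cL t)) := by
    intro t htt
    exact (hK t htt).div_const (t ^ m)
  have hle : volume.restrict (Ioc (0:ℝ) r) ≤ volume.restrict (Icc 0 r) :=
    Measure.restrict_mono Ioc_subset_Icc_self le_rfl
  have h := MeasureTheory.tendsto_integral_of_dominated_convergence
    (μ := volume.restrict (Ioc (0:ℝ) r))
    (F := fun k t => primH m (c k) t) (f := fun t => primH m cL t)
    (bound := fun _ => M * r)
    (fun k => (primH_aesm hr (hmeas k) (hb k)).mono_measure hle)
    (integrableOn_const measure_Ioc_lt_top.ne)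
    (fun k => by
      filter_upwards [ae_restrict_mem measurableSet_Ioc] with t ht
      rw [Real.norm_eq_abs]
      exact primH_abs_le hm ht.1.le ht.2 hM (hb k))
    (by
      filter_upwards [ae_restrict_mem measurableSet_Ioc] with t ht
      exact hH t ⟨ht.1.le, ht.2⟩)
  have heq : ∀ d : ℝ → ℝ, primOp m d r = ∫ t in Ioc (0:ℝ) r, primH m d t := by
    intro d
    rw [primOp, intervalIntegral.integral_of_le hr]
  simp_rw [heq]
  exact h

noncomputable def iterUV (m : ℕ) (p q : ℝ → ℝ) (f g : ℝ → ℝ → ℝ) (α β : ℝ)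
    (u₀ v₀ : ℝ → ℝ) : ℕ → (ℝ → ℝ) × (ℝ → ℝ)
  | 0 => (u₀, v₀)
  | (k+1) =>
    (fun r => α + primOp m (fun s => p s *
        f ((iterUV m p q f g α β u₀ v₀ k).1 s) ((iterUV m p q f g α β u₀ v₀ k).2 s)) r,
     fun r => β + primOp m (fun s => q s *
        g ((iterUV m p q f g α β u₀ v₀ k).1 s) ((iterUV m p q f g α β u₀ v₀ k).2 s)) r)

/-- `(u, v)` is a positive entire radial solution with central values `(α, β)`. -/
def IsEntireSolution (n : ℕ) (p q : ℝ → ℝ) (f g : ℝ → ℝ → ℝ) (α β : ℝ)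
    (u v : ℝ → ℝ) : Prop :=
  ContinuousOn u (Ici 0) ∧ ContinuousOn v (Ici 0) ∧
  (∀ r ∈ Ici (0:ℝ), 0 < u r) ∧ (∀ r ∈ Ici (0:ℝ), 0 < v r) ∧
  (∀ r : ℝ, 0 ≤ r → u r = α +
    ∫ t in (0:ℝ)..r, (∫ s in (0:ℝ)..t, s ^ (n - 1) * p s * f (u s) (v s)) / t ^ (n - 1)) ∧
  (∀ r : ℝ, 0 ≤ r → v r = β +
    ∫ t in (0:ℝ)..r, (∫ s in (0:ℝ)..t, s ^ (n - 1) * q s * g (u s) (v s)) / t ^ (n - 1))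

theorem stmt11 (n : ℕ) (hn : 3 ≤ n)
    (p q : ℝ → ℝ)
    (hp_cont : ContinuousOn p (Ici 0)) (hq_cont : ContinuousOn q (Ici 0))
    (hp_nonneg : ∀ r ∈ Ici (0:ℝ), 0 ≤ p r) (hq_nonneg : ∀ r ∈ Ici (0:ℝ), 0 ≤ q r)
    (f g : ℝ → ℝ → ℝ)
    (hf_cont : Continuous fun x : ℝ × ℝ => f x.1 x.2)
    (hg_cont : Continuous fun x : ℝ × ℝ => g x.1 x.2)
    (hf_nonneg : ∀ s t : ℝ, 0 ≤ s → 0 ≤ t → 0 ≤ f s t)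
    (hg_nonneg : ∀ s t : ℝ, 0 ≤ s → 0 ≤ t → 0 ≤ g s t)
    (hf_mono : ∀ s t s' t' : ℝ, 0 ≤ s → 0 ≤ t → s ≤ s' → t ≤ t' → f s t ≤ f s' t')
    (hg_mono : ∀ s t s' t' : ℝ, 0 ≤ s → 0 ≤ t → s ≤ s' → t ≤ t' → g s t ≤ g s' t')
    (G : Set (ℝ × ℝ))
    (hG : G = {ab : ℝ × ℝ | 0 < ab.1 ∧ 0 < ab.2 ∧
      ∃ u v : ℝ → ℝ, IsEntireSolution n p q f g ab.1 ab.2 u v}) :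
    ∀ α₀ β₀ α β : ℝ, (α₀, β₀) ∈ G → 0 < α → α ≤ α₀ → 0 < β → β ≤ β₀ →
      (α, β) ∈ G := by
  subst hG
  rintro α₀ β₀ α β ⟨hα₀, hβ₀, u₀, v₀, hu₀c, hv₀c, hu₀pos, hv₀pos, hu₀eq, hv₀eq⟩ hα hαle hβ hβle
  simp only [mem_setOf_eq] at *
  set m := n - 1 with hmdef
  have hm : 1 ≤ m := by omega
  -- helper to get measurability and bounds from continuity
  have hmb : ∀ c : ℝ → ℝ, ContinuousOn c (Ici 0) → ∀ r : ℝ, 0 ≤ r →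
      AEStronglyMeasurable c (volume.restrict (Icc 0 r)) ∧
      ∃ M, 0 ≤ M ∧ ∀ s ∈ Icc 0 r, |c s| ≤ M := by
    intro c hc r hr
    have hcI : ContinuousOn c (Icc 0 r) := hc.mono (Icc_subset_Ici_self)
    refine ⟨hcI.aestronglyMeasurable measurableSet_Icc, ?_⟩
    obtain ⟨C, hC⟩ := isCompact_Icc.exists_bound_of_continuousOn hcI
    exact ⟨max C 0, le_max_right _ _, fun s hs => (hC s hs).trans (le_max_left _ _)⟩
  -- rewrite the defining equations in primOp form
  have hprim_eq : ∀ (c : ℝ → ℝ) (w z : ℝ → ℝ) (r : ℝ),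
      (∫ t in (0:ℝ)..r, (∫ s in (0:ℝ)..t, s ^ (n-1) * c s * f (w s) (z s)) / t ^ (n-1))
        = primOp m (fun s => c s * f (w s) (z s)) r := by
    intro c w z r
    simp only [primOp, primH, primK, mul_assoc, hmdef]
  have hprim_eq_g : ∀ (c : ℝ → ℝ) (w z : ℝ → ℝ) (r : ℝ),
      (∫ t in (0:ℝ)..r, (∫ s in (0:ℝ)..t, s ^ (n-1) * c s * g (w s) (z s)) / t ^ (n-1))
        = primOp m (fun s => c s * g (w s) (z s)) r := by
    intro c w z r
    simp only [primOp, primH, primK, mul_assoc, hmdef]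
  have hu₀eq' : ∀ r : ℝ, 0 ≤ r →
      u₀ r = α₀ + primOp m (fun s => p s * f (u₀ s) (v₀ s)) r := by
    intro r hr; rw [hu₀eq r hr, hprim_eq]
  have hv₀eq' : ∀ r : ℝ, 0 ≤ r →
      v₀ r = β₀ + primOp m (fun s => q s * g (u₀ s) (v₀ s)) r := by
    intro r hr; rw [hv₀eq r hr, hprim_eq_g]
  set U : ℕ → ℝ → ℝ := fun k => (iterUV m p q f g α β u₀ v₀ k).1 with hUdef
  set V : ℕ → ℝ → ℝ := fun k => (iterUV m p q f g α β u₀ v₀ k).2 with hVdef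
  have hU0 : U 0 = u₀ := rfl
  have hV0 : V 0 = v₀ := rfl
  have hUsucc : ∀ k, U (k+1) = fun r => α +
      primOp m (fun s => p s * f (U k s) (V k s)) r := fun k => rfl
  have hVsucc : ∀ k, V (k+1) = fun r => β +
      primOp m (fun s => q s * g (U k s) (V k s)) r := fun k => rfl
  have hcont_c : ∀ k : ℕ, ContinuousOn (U k) (Ici 0) → ContinuousOn (V k) (Ici 0) →
      ContinuousOn (fun s => p s * f (U k s) (V k s)) (Ici 0) ∧
      ContinuousOn (fun s => q s * g (U k s) (V k s)) (Ici 0) := by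
    intro k hu hv
    exact ⟨hp_cont.mul (hf_cont.comp_continuousOn (hu.prodMk hv)),
      hq_cont.mul (hg_cont.comp_continuousOn (hu.prodMk hv))⟩
  have key : ∀ k : ℕ, (ContinuousOn (U k) (Ici 0) ∧ ContinuousOn (V k) (Ici 0)) ∧
      (∀ r ∈ Ici (0:ℝ), (α ≤ U k r ∧ U k r ≤ u₀ r) ∧ (β ≤ V k r ∧ V k r ≤ v₀ r)) ∧
      (∀ r ∈ Ici (0:ℝ), U (k+1) r ≤ U k r ∧ V (k+1) r ≤ V k r) := by
    intro k
    induction k with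
    | zero =>
      have hc0f : ∀ r : ℝ, 0 ≤ r → ∀ s ∈ Icc (0:ℝ) r, 0 ≤ p s * f (u₀ s) (v₀ s) :=
        fun r hr s hs => mul_nonneg (hp_nonneg s hs.1)
          (hf_nonneg _ _ (hu₀pos s hs.1).le (hv₀pos s hs.1).le)
      have hc0g : ∀ r : ℝ, 0 ≤ r → ∀ s ∈ Icc (0:ℝ) r, 0 ≤ q s * g (u₀ s) (v₀ s) :=
        fun r hr s hs => mul_nonneg (hq_nonneg s hs.1)
          (hg_nonneg _ _ (hu₀pos s hs.1).le (hv₀pos s hs.1).le)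
      refine ⟨⟨hu₀c, hv₀c⟩, ?_, ?_⟩
      · intro r hr
        have h1 := primOp_nonneg (m := m) hr (hc0f r hr)
        have h2 := primOp_nonneg (m := m) hr (hc0g r hr)
        have e1 := hu₀eq' r hr
        have e2 := hv₀eq' r hr
        exact ⟨⟨by rw [hU0]; linarith, le_refl _⟩, ⟨by rw [hV0]; linarith, le_refl _⟩⟩
      · intro r hr
        constructor
        · show α + primOp m (fun s => p s * f (u₀ s) (v₀ s)) r ≤ u₀ r
          rw [hu₀eq' r hr]; linarith
        · show β + primOp m (fun s => q s * g (u₀ s) (v₀ s)) r ≤ v₀ r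
          rw [hv₀eq' r hr]; linarith
    | succ k ih =>
      obtain ⟨⟨ihcu, ihcv⟩, ihb, ihd⟩ := ih
      obtain ⟨hcF, hcG⟩ := hcont_c k ihcu ihcv
      have hcU1 : ContinuousOn (U (k+1)) (Ici 0) := by
        rw [hUsucc k]
        exact continuousOn_const.add (primOp_contOn hm
          (fun r hr => (hmb _ hcF r hr).1) (fun r hr => (hmb _ hcF r hr).2))
      have hcV1 : ContinuousOn (V (k+1)) (Ici 0) := by
        rw [hVsucc k]
        exact continuousOn_const.add (primOp_contOn hm
          (fun r hr => (hmb _ hcG r hr).1) (fun r hr => (hmb _ hcG r hr).2))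
      obtain ⟨hcF1, hcG1⟩ := hcont_c (k+1) hcU1 hcV1
      have hb1 : ∀ r ∈ Ici (0:ℝ),
          (α ≤ U (k+1) r ∧ U (k+1) r ≤ u₀ r) ∧ (β ≤ V (k+1) r ∧ V (k+1) r ≤ v₀ r) := by
        intro r hr
        have hnn : ∀ s ∈ Icc (0:ℝ) r, 0 ≤ p s * f (U k s) (V k s) := by
          intro s hs
          have hbs := ihb s hs.1
          exact mul_nonneg (hp_nonneg s hs.1)
            (hf_nonneg _ _ (hα.le.trans hbs.1.1) (hβ.le.trans hbs.2.1))
        have hnng : ∀ s ∈ Icc (0:ℝ) r, 0 ≤ q s * g (U k s) (V k s) := by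
          intro s hs
          have hbs := ihb s hs.1
          exact mul_nonneg (hq_nonneg s hs.1)
            (hg_nonneg _ _ (hα.le.trans hbs.1.1) (hβ.le.trans hbs.2.1))
        have h1 := primOp_nonneg (m := m) hr hnn
        have h2 := primOp_nonneg (m := m) hr hnng
        have e1 : U (k+1) r = α + primOp m (fun s => p s * f (U k s) (V k s)) r := by
          rw [hUsucc k]
        have e2 : V (k+1) r = β + primOp m (fun s => q s * g (U k s) (V k s)) r := by
          rw [hVsucc k]
        refine ⟨⟨by rw [e1]; linarith, ?_⟩, ⟨by rw [e2]; linarith, ?_⟩⟩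
        · exact (ihd r hr).1.trans (ihb r hr).1.2
        · exact (ihd r hr).2.trans (ihb r hr).2.2
      refine ⟨⟨hcU1, hcV1⟩, hb1, ?_⟩
      intro r hr
      obtain ⟨Mf₁, hMf₁0, hbdf1⟩ := (hmb _ hcF1 r hr).2
      obtain ⟨Mf₂, hMf₂0, hbdf2⟩ := (hmb _ hcF r hr).2
      obtain ⟨Mg₁, hMg₁0, hbdg1⟩ := (hmb _ hcG1 r hr).2
      obtain ⟨Mg₂, hMg₂0, hbdg2⟩ := (hmb _ hcG r hr).2
      have hleF : ∀ s ∈ Icc (0:ℝ) r,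
          p s * f (U (k+1) s) (V (k+1) s) ≤ p s * f (U k s) (V k s) := by
        intro s hs
        have hbs := hb1 s hs.1
        have hds := ihd s hs.1
        exact mul_le_mul_of_nonneg_left
          (hf_mono _ _ _ _ (hα.le.trans hbs.1.1) (hβ.le.trans hbs.2.1) hds.1 hds.2)
          (hp_nonneg s hs.1)
      have hleG : ∀ s ∈ Icc (0:ℝ) r,
          q s * g (U (k+1) s) (V (k+1) s) ≤ q s * g (U k s) (V k s) := by
        intro s hs
        have hbs := hb1 s hs.1
        have hds := ihd s hs.1
        exact mul_le_mul_of_nonneg_left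
          (hg_mono _ _ _ _ (hα.le.trans hbs.1.1) (hβ.le.trans hbs.2.1) hds.1 hds.2)
          (hq_nonneg s hs.1)
      constructor
      · show α + primOp m (fun s => p s * f (U (k+1) s) (V (k+1) s)) r
          ≤ α + primOp m (fun s => p s * f (U k s) (V k s)) r
        have := primOp_mono hm hr (hmb _ hcF1 r hr).1 (hmb _ hcF r hr).1
          hMf₁0 hMf₂0 hbdf1 hbdf2 hleF
        linarith
      · show β + primOp m (fun s => q s * g (U (k+1) s) (V (k+1) s)) r
          ≤ β + primOp m (fun s => q s * g (U k s) (V k s)) r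
        have := primOp_mono hm hr (hmb _ hcG1 r hr).1 (hmb _ hcG r hr).1
          hMg₁0 hMg₂0 hbdg1 hbdg2 hleG
        linarith
  -- pass to the limit
  have hUanti : ∀ r ∈ Ici (0:ℝ), Antitone (fun k => U k r) := fun r hr =>
    antitone_nat_of_succ_le (fun k => ((key k).2.2 r hr).1)
  have hVanti : ∀ r ∈ Ici (0:ℝ), Antitone (fun k => V k r) := fun r hr =>
    antitone_nat_of_succ_le (fun k => ((key k).2.2 r hr).2)
  have hmax : ∀ r : ℝ, max r 0 ∈ Ici (0:ℝ) := fun r => le_max_right r 0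
  set W : ℕ → ℝ → ℝ := fun k r => U k (max r 0) with hWdef
  set X : ℕ → ℝ → ℝ := fun k r => V k (max r 0) with hXdef
  have hWc : ∀ k, Continuous (W k) := fun k =>
    ((key k).1.1).comp_continuous (continuous_id.max continuous_const) hmax
  have hXc : ∀ k, Continuous (X k) := fun k =>
    ((key k).1.2).comp_continuous (continuous_id.max continuous_const) hmax
  set uinf : ℝ → ℝ := fun r => ⨅ k, W k r with huinfdef
  set vinf : ℝ → ℝ := fun r => ⨅ k, X k r with hvinfdef
  have hWbdd : ∀ r, BddBelow (range fun k => W k r) :=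
    fun r => ⟨α, forall_mem_range.2 fun k => ((key k).2.1 _ (hmax r)).1.1⟩
  have hXbdd : ∀ r, BddBelow (range fun k => X k r) :=
    fun r => ⟨β, forall_mem_range.2 fun k => ((key k).2.1 _ (hmax r)).2.1⟩
  have hutend : ∀ r, Tendsto (fun k => W k r) atTop (𝓝 (uinf r)) :=
    fun r => tendsto_atTop_ciInf (hUanti _ (hmax r)) (hWbdd r)
  have hvtend : ∀ r, Tendsto (fun k => X k r) atTop (𝓝 (vinf r)) :=
    fun r => tendsto_atTop_ciInf (hVanti _ (hmax r)) (hXbdd r)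
  have humeas : Measurable uinf := measurable_of_tendsto_metrizable
    (fun k => (hWc k).measurable) (tendsto_pi_nhds.2 hutend)
  have hvmeas : Measurable vinf := measurable_of_tendsto_metrizable
    (fun k => (hXc k).measurable) (tendsto_pi_nhds.2 hvtend)
  have hWeq : ∀ r : ℝ, 0 ≤ r → ∀ k, W k r = U k r := by
    intro r hr k; rw [hWdef]; simp [max_eq_left hr]
  have hXeq : ∀ r : ℝ, 0 ≤ r → ∀ k, X k r = V k r := by
    intro r hr k; rw [hXdef]; simp [max_eq_left hr]
  have hutend' : ∀ r : ℝ, 0 ≤ r → Tendsto (fun k => U k r) atTop (𝓝 (uinf r)) := by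
    intro r hr
    have h := hutend r
    rwa [funext (hWeq r hr)] at h
  have hvtend' : ∀ r : ℝ, 0 ≤ r → Tendsto (fun k => V k r) atTop (𝓝 (vinf r)) := by
    intro r hr
    have h := hvtend r
    rwa [funext (hXeq r hr)] at h
  have hαuinf : ∀ r : ℝ, 0 ≤ r → α ≤ uinf r := fun r hr =>
    le_ciInf fun k => ((key k).2.1 _ (hmax r)).1.1
  have hβvinf : ∀ r : ℝ, 0 ≤ r → β ≤ vinf r := fun r hr =>
    le_ciInf fun k => ((key k).2.1 _ (hmax r)).2.1
  have huinfle : ∀ r : ℝ, 0 ≤ r → ∀ k, uinf r ≤ U k r := by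
    intro r hr k
    have h := ciInf_le (hWbdd r) k
    rwa [hWeq r hr k] at h
  have hvinfle : ∀ r : ℝ, 0 ≤ r → ∀ k, vinf r ≤ V k r := by
    intro r hr k
    have h := ciInf_le (hXbdd r) k
    rwa [hXeq r hr k] at h
  -- measurability of the limit integrands
  have hcLmeas : ∀ r : ℝ, 0 ≤ r →
      AEStronglyMeasurable (fun s => p s * f (uinf s) (vinf s)) (volume.restrict (Icc 0 r)) := by
    intro r hr
    have h1 : AEStronglyMeasurable p (volume.restrict (Icc 0 r)) :=
      (hp_cont.mono Icc_subset_Ici_self).aestronglyMeasurable measurableSet_Icc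
    have h2 : Measurable fun s => f (uinf s) (vinf s) :=
      hf_cont.measurable.comp (humeas.prodMk hvmeas)
    exact h1.mul h2.aestronglyMeasurable.restrict
  have hcLmeasg : ∀ r : ℝ, 0 ≤ r →
      AEStronglyMeasurable (fun s => q s * g (uinf s) (vinf s)) (volume.restrict (Icc 0 r)) := by
    intro r hr
    have h1 : AEStronglyMeasurable q (volume.restrict (Icc 0 r)) :=
      (hq_cont.mono Icc_subset_Ici_self).aestronglyMeasurable measurableSet_Icc
    have h2 : Measurable fun s => g (uinf s) (vinf s) :=
      hg_cont.measurable.comp (humeas.prodMk hvmeas)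
    exact h1.mul h2.aestronglyMeasurable.restrict
  -- uniform bounds on [0, r] from the top solution
  have hcF0 : ContinuousOn (fun s => p s * f (u₀ s) (v₀ s)) (Ici 0) :=
    (hcont_c 0 hu₀c hv₀c).1
  have hcG0 : ContinuousOn (fun s => q s * g (u₀ s) (v₀ s)) (Ici 0) :=
    (hcont_c 0 hu₀c hv₀c).2
  have hbounds : ∀ r : ℝ, 0 ≤ r → ∃ M, 0 ≤ M ∧
      (∀ k, ∀ s ∈ Icc (0:ℝ) r, |p s * f (U k s) (V k s)| ≤ M) ∧
      (∀ s ∈ Icc (0:ℝ) r, |p s * f (uinf s) (vinf s)| ≤ M) := by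
    intro r hr
    obtain ⟨M, hM0, hMb⟩ := (hmb _ hcF0 r hr).2
    refine ⟨M, hM0, ?_, ?_⟩
    · intro k s hs
      have hbs := (key k).2.1 s hs.1
      have hnn : 0 ≤ p s * f (U k s) (V k s) :=
        mul_nonneg (hp_nonneg s hs.1)
          (hf_nonneg _ _ (hα.le.trans hbs.1.1) (hβ.le.trans hbs.2.1))
      have hle : p s * f (U k s) (V k s) ≤ p s * f (u₀ s) (v₀ s) :=
        mul_le_mul_of_nonneg_left
          (hf_mono _ _ _ _ (hα.le.trans hbs.1.1) (hβ.le.trans hbs.2.1) hbs.1.2 hbs.2.2)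
          (hp_nonneg s hs.1)
      rw [abs_of_nonneg hnn]
      exact hle.trans ((le_abs_self _).trans (hMb s hs))
    · intro s hs
      have h1 : α ≤ uinf s := hαuinf s hs.1
      have h2 : β ≤ vinf s := hβvinf s hs.1
      have h3 : uinf s ≤ u₀ s := huinfle s hs.1 0
      have h4 : vinf s ≤ v₀ s := hvinfle s hs.1 0
      have hnn : 0 ≤ p s * f (uinf s) (vinf s) :=
        mul_nonneg (hp_nonneg s hs.1) (hf_nonneg _ _ (hα.le.trans h1) (hβ.le.trans h2))
      have hle : p s * f (uinf s) (vinf s) ≤ p s * f (u₀ s) (v₀ s) :=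
        mul_le_mul_of_nonneg_left
          (hf_mono _ _ _ _ (hα.le.trans h1) (hβ.le.trans h2) h3 h4) (hp_nonneg s hs.1)
      rw [abs_of_nonneg hnn]
      exact hle.trans ((le_abs_self _).trans (hMb s hs))
  have hboundsg : ∀ r : ℝ, 0 ≤ r → ∃ M, 0 ≤ M ∧
      (∀ k, ∀ s ∈ Icc (0:ℝ) r, |q s * g (U k s) (V k s)| ≤ M) ∧
      (∀ s ∈ Icc (0:ℝ) r, |q s * g (uinf s) (vinf s)| ≤ M) := by
    intro r hr
    obtain ⟨M, hM0, hMb⟩ := (hmb _ hcG0 r hr).2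
    refine ⟨M, hM0, ?_, ?_⟩
    · intro k s hs
      have hbs := (key k).2.1 s hs.1
      have hnn : 0 ≤ q s * g (U k s) (V k s) :=
        mul_nonneg (hq_nonneg s hs.1)
          (hg_nonneg _ _ (hα.le.trans hbs.1.1) (hβ.le.trans hbs.2.1))
      have hle : q s * g (U k s) (V k s) ≤ q s * g (u₀ s) (v₀ s) :=
        mul_le_mul_of_nonneg_left
          (hg_mono _ _ _ _ (hα.le.trans hbs.1.1) (hβ.le.trans hbs.2.1) hbs.1.2 hbs.2.2)
          (hq_nonneg s hs.1)
      rw [abs_of_nonneg hnn]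
      exact hle.trans ((le_abs_self _).trans (hMb s hs))
    · intro s hs
      have h1 : α ≤ uinf s := hαuinf s hs.1
      have h2 : β ≤ vinf s := hβvinf s hs.1
      have h3 : uinf s ≤ u₀ s := huinfle s hs.1 0
      have h4 : vinf s ≤ v₀ s := hvinfle s hs.1 0
      have hnn : 0 ≤ q s * g (uinf s) (vinf s) :=
        mul_nonneg (hq_nonneg s hs.1) (hg_nonneg _ _ (hα.le.trans h1) (hβ.le.trans h2))
      have hle : q s * g (uinf s) (vinf s) ≤ q s * g (u₀ s) (v₀ s) :=
        mul_le_mul_of_nonneg_left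
          (hg_mono _ _ _ _ (hα.le.trans h1) (hβ.le.trans h2) h3 h4) (hq_nonneg s hs.1)
      rw [abs_of_nonneg hnn]
      exact hle.trans ((le_abs_self _).trans (hMb s hs))
  -- pointwise convergence of integrands
  have hlimF : ∀ s : ℝ, 0 ≤ s → Tendsto (fun k => p s * f (U k s) (V k s)) atTop
      (𝓝 (p s * f (uinf s) (vinf s))) := by
    intro s hs
    have h := (hutend' s hs).prodMk_nhds (hvtend' s hs)
    exact ((hf_cont.tendsto (uinf s, vinf s)).comp h).const_mul (p s)
  have hlimG : ∀ s : ℝ, 0 ≤ s → Tendsto (fun k => q s * g (U k s) (V k s)) atTop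
      (𝓝 (q s * g (uinf s) (vinf s))) := by
    intro s hs
    have h := (hutend' s hs).prodMk_nhds (hvtend' s hs)
    exact ((hg_cont.tendsto (uinf s, vinf s)).comp h).const_mul (q s)
  -- the limit equations
  have hueq : ∀ r : ℝ, 0 ≤ r →
      uinf r = α + primOp m (fun s => p s * f (uinf s) (vinf s)) r := by
    intro r hr
    obtain ⟨M, hM0, hMk, hML⟩ := hbounds r hr
    have ht1 : Tendsto (fun k => U (k+1) r) atTop (𝓝 (uinf r)) :=
      (hutend' r hr).comp (tendsto_add_atTop_nat 1)
    have ht2 : Tendsto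
        (fun k => α + primOp m (fun s => p s * f (U k s) (V k s)) r) atTop
        (𝓝 (α + primOp m (fun s => p s * f (uinf s) (vinf s)) r)) := by
      refine tendsto_const_nhds.add (primOp_tendsto hm hr hM0 ?_ (hcLmeas r hr) hMk hML ?_)
      · intro k
        exact (hmb _ (hcont_c k (key k).1.1 (key k).1.2).1 r hr).1
      · intro s hs
        exact hlimF s hs.1
    have heq : (fun k => U (k+1) r)
        = fun k => α + primOp m (fun s => p s * f (U k s) (V k s)) r :=
      funext fun k => by rw [hUsucc k]
    rw [heq] at ht1
    exact tendsto_nhds_unique ht1 ht2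
  have hveq : ∀ r : ℝ, 0 ≤ r →
      vinf r = β + primOp m (fun s => q s * g (uinf s) (vinf s)) r := by
    intro r hr
    obtain ⟨M, hM0, hMk, hML⟩ := hboundsg r hr
    have ht1 : Tendsto (fun k => V (k+1) r) atTop (𝓝 (vinf r)) :=
      (hvtend' r hr).comp (tendsto_add_atTop_nat 1)
    have ht2 : Tendsto
        (fun k => β + primOp m (fun s => q s * g (U k s) (V k s)) r) atTop
        (𝓝 (β + primOp m (fun s => q s * g (uinf s) (vinf s)) r)) := by
      refine tendsto_const_nhds.add (primOp_tendsto hm hr hM0 ?_ (hcLmeasg r hr) hMk hML ?_)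
      · intro k
        exact (hmb _ (hcont_c k (key k).1.1 (key k).1.2).2 r hr).1
      · intro s hs
        exact hlimG s hs.1
    have heq : (fun k => V (k+1) r)
        = fun k => β + primOp m (fun s => q s * g (U k s) (V k s)) r :=
      funext fun k => by rw [hVsucc k]
    rw [heq] at ht1
    exact tendsto_nhds_unique ht1 ht2
  -- continuity of the limit
  have hcuinf : ContinuousOn uinf (Ici 0) := by
    have hc : ContinuousOn (fun r => α + primOp m (fun s => p s * f (uinf s) (vinf s)) r)
        (Ici 0) := by
      refine continuousOn_const.add (primOp_contOn hm (fun r hr => hcLmeas r hr) ?_)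
      intro r hr
      obtain ⟨M, hM0, _, hML⟩ := hbounds r hr
      exact ⟨M, hM0, hML⟩
    exact hc.congr (fun r hr => hueq r hr)
  have hcvinf : ContinuousOn vinf (Ici 0) := by
    have hc : ContinuousOn (fun r => β + primOp m (fun s => q s * g (uinf s) (vinf s)) r)
        (Ici 0) := by
      refine continuousOn_const.add (primOp_contOn hm (fun r hr => hcLmeasg r hr) ?_)
      intro r hr
      obtain ⟨M, hM0, _, hML⟩ := hboundsg r hr
      exact ⟨M, hM0, hML⟩
    exact hc.congr (fun r hr => hveq r hr)
  refine ⟨hα, hβ, uinf, vinf, hcuinf, hcvinf,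
    fun r hr => lt_of_lt_of_le hα (hαuinf r hr),
    fun r hr => lt_of_lt_of_le hβ (hβvinf r hr), ?_, ?_⟩
  · intro r hr
    rw [hprim_eq p uinf vinf r]
    exact hueq r hr
  · intro r hr
    rw [hprim_eq_g q uinf vinf r]
    exact hveq r hr
end

section
/- Let y : [R₀, R_a) → (0,∞) be C² with y(R₀) = a > s*, y'(R₀) = 0, satisfying y'' + (n-1)y'/r = p(r)·ℓ(y(r)) where ℓ is continuous, positive, and nondecreasing on [s*,∞). Set C(s) = ∫_{s*}^s dτ/ℓ(τ). Then for all r ∈ [R₀, R_a), C(y(r)) ≤ C(a) + ∫_{R₀}^r t^{1-n}(∫_{R₀}^t s^{n-1} p(s) ds) dt. -/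
open MeasureTheory Set Filter Topology intervalIntegral

theorem stmt13 (n : ℕ) (hn : 3 ≤ n) (R₀ Ra : ℝ) (hR₀ : 0 < R₀) (hRa : R₀ < Ra)
    (p : ℝ → ℝ) (hp_cont : ContinuousOn p (Ici 0))
    (hp_nonneg : ∀ r ∈ Ici (0:ℝ), 0 ≤ p r)
    (sstar a : ℝ) (hsstar : 0 < sstar) (ha : sstar < a)
    (ℓ : ℝ → ℝ) (hℓ_cont : ContinuousOn ℓ (Ici sstar))
    (hℓ_pos : ∀ s ∈ Ici sstar, 0 < ℓ s) (hℓ_mono : MonotoneOn ℓ (Ici sstar))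
    (C : ℝ → ℝ) (hC : ∀ s, C s = ∫ τ in sstar..s, 1 / ℓ τ)
    (y y' : ℝ → ℝ)
    (hy_pos : ∀ r ∈ Ico R₀ Ra, sstar < y r)
    (hy0 : y R₀ = a) (hy'0 : y' R₀ = 0)
    (hyd : ∀ r ∈ Ico R₀ Ra, HasDerivAt y (y' r) r)
    (hy'd : ∀ r ∈ Ico R₀ Ra,
      HasDerivAt y' (p r * ℓ (y r) - ((n : ℝ) - 1) / r * y' r) r) :
    ∀ r ∈ Ico R₀ Ra,
      C (y r) ≤ C a +
        ∫ t in R₀..r, (∫ s in R₀..t, s ^ (n - 1) * p s) / t ^ (n - 1) := by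
  intro r hr
  obtain ⟨hR₀r, hrRa⟩ := hr
  have hsub : Icc R₀ r ⊆ Ico R₀ Ra := fun t ht => ⟨ht.1, lt_of_le_of_lt ht.2 hrRa⟩
  have hIcoIci : Ico R₀ Ra ⊆ Ici (0:ℝ) := fun t ht => le_trans hR₀.le ht.1
  have hpos : ∀ t ∈ Ico R₀ Ra, (0:ℝ) < t := fun t ht => lt_of_lt_of_le hR₀ ht.1
  have hy_cont : ContinuousOn y (Ico R₀ Ra) := fun t ht =>
    (hyd t ht).continuousAt.continuousWithinAt
  have hy'_cont : ContinuousOn y' (Ico R₀ Ra) := fun t ht =>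
    (hy'd t ht).continuousAt.continuousWithinAt
  have hmaps : MapsTo y (Ico R₀ Ra) (Ici sstar) := fun t ht => (hy_pos t ht).le
  have hℓy_cont : ContinuousOn (fun t => ℓ (y t)) (Ico R₀ Ra) :=
    hℓ_cont.comp hy_cont hmaps
  have hℓy_pos : ∀ t ∈ Ico R₀ Ra, 0 < ℓ (y t) := fun t ht => hℓ_pos _ (hy_pos t ht).le
  -- continuity of the main integrand
  have hq_cont : ContinuousOn (fun s => s ^ (n-1) * (p s * ℓ (y s))) (Ico R₀ Ra) :=
    ((continuous_pow (n-1)).continuousOn).mul ((hp_cont.mono hIcoIci).mul hℓy_cont)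
  have hsub' : ∀ t ∈ Icc R₀ r, Icc R₀ t ⊆ Ico R₀ Ra := fun t ht s hs =>
    hsub ⟨hs.1, le_trans hs.2 ht.2⟩
  -- derivative of w t = t^(n-1) * y' t
  have hwd : ∀ u ∈ Ico R₀ Ra,
      HasDerivAt (fun t => t ^ (n-1) * y' t) (u ^ (n-1) * (p u * ℓ (y u))) u := by
    intro u hu
    have hu0 : u ≠ 0 := (hpos u hu).ne'
    have h := (hasDerivAt_pow (n-1) u).mul (hy'd u hu)
    refine h.congr_deriv ?_
    symm
    have hpow : (u:ℝ) ^ (n-1) = u ^ (n-1-1) * u := by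
      rw [← pow_succ]; congr 1; omega
    have hcast : ((n-1:ℕ):ℝ) = (n:ℝ) - 1 := by
      push_cast [Nat.cast_sub (by omega : 1 ≤ n)]; ring
    rw [hcast, hpow]
    field_simp
    ring
  -- w t = ∫ q
  have hw_eq : ∀ t ∈ Icc R₀ r,
      t ^ (n-1) * y' t = ∫ s in R₀..t, s ^ (n-1) * (p s * ℓ (y s)) := by
    intro t ht
    have hle : R₀ ≤ t := ht.1
    have h1 : ∀ u ∈ uIcc R₀ t,
        HasDerivAt (fun t => t ^ (n-1) * y' t) (u ^ (n-1) * (p u * ℓ (y u))) u := by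
      intro u hu
      rw [uIcc_of_le hle] at hu
      exact hwd u (hsub' t ht hu)
    have h2 : IntervalIntegrable (fun s => s ^ (n-1) * (p s * ℓ (y s))) volume R₀ t := by
      apply ContinuousOn.intervalIntegrable
      rw [uIcc_of_le hle]
      exact hq_cont.mono (hsub' t ht)
    have h3 := intervalIntegral.integral_eq_sub_of_hasDerivAt h1 h2
    rw [h3, hy'0]; ring
  have hq_nonneg : ∀ s ∈ Ico R₀ Ra, 0 ≤ s ^ (n-1) * (p s * ℓ (y s)) := fun s hs =>
    mul_nonneg (pow_nonneg (hIcoIci hs) _)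
      (mul_nonneg (hp_nonneg s (hIcoIci hs)) (hℓy_pos s hs).le)
  have hy'_nonneg : ∀ t ∈ Icc R₀ r, 0 ≤ y' t := by
    intro t ht
    have hA : (0:ℝ) < t ^ (n-1) := pow_pos (hpos t (hsub ht)) _
    have h0 : 0 ≤ ∫ s in R₀..t, s ^ (n-1) * (p s * ℓ (y s)) :=
      intervalIntegral.integral_nonneg ht.1 (fun s hs => hq_nonneg s (hsub' t ht hs))
    nlinarith [hw_eq t ht]
  have hy_mono : MonotoneOn y (Icc R₀ r) := by
    apply monotoneOn_of_deriv_nonneg (convex_Icc R₀ r) (hy_cont.mono hsub)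
    · intro t ht
      rw [interior_Icc] at ht
      exact (hyd t (hsub (Ioo_subset_Icc_self ht))).differentiableAt.differentiableWithinAt
    · intro t ht
      rw [interior_Icc] at ht
      rw [(hyd t (hsub (Ioo_subset_Icc_self ht))).deriv]
      exact hy'_nonneg t (Ioo_subset_Icc_self ht)
  -- key pointwise bound
  have key : ∀ t ∈ Icc R₀ r,
      y' t * (1 / ℓ (y t)) ≤ (∫ s in R₀..t, s ^ (n-1) * p s) / t ^ (n-1) := by
    intro t ht
    have htIco := hsub ht
    have htpos := hpos t htIco
    have hℓt := hℓy_pos t htIco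
    have hA : (0:ℝ) < t ^ (n-1) := pow_pos htpos _
    have hint2 : IntervalIntegrable (fun s => s ^ (n-1) * p s * ℓ (y t)) volume R₀ t := by
      apply ContinuousOn.intervalIntegrable
      rw [uIcc_of_le ht.1]
      exact (((continuous_pow (n-1)).continuousOn.mul
        (hp_cont.mono (fun s hs => hIcoIci (hsub' t ht hs)))).mul continuousOn_const)
    have hint1 : IntervalIntegrable (fun s => s ^ (n-1) * (p s * ℓ (y s))) volume R₀ t := by
      apply ContinuousOn.intervalIntegrable
      rw [uIcc_of_le ht.1]
      exact hq_cont.mono (hsub' t ht)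
    have hmono_int : (∫ s in R₀..t, s ^ (n-1) * (p s * ℓ (y s)))
        ≤ (∫ s in R₀..t, s ^ (n-1) * p s) * ℓ (y t) := by
      rw [← intervalIntegral.integral_mul_const]
      apply intervalIntegral.integral_mono_on ht.1 hint1 hint2
      intro s hs
      have hsIco := hsub' t ht hs
      have h1 : ℓ (y s) ≤ ℓ (y t) :=
        hℓ_mono (hy_pos s hsIco).le (hy_pos t htIco).le
          (hy_mono ⟨hs.1, le_trans hs.2 ht.2⟩ ht hs.2)
      have h2 : 0 ≤ s ^ (n-1) * p s :=
        mul_nonneg (pow_nonneg (hIcoIci hsIco) _) (hp_nonneg s (hIcoIci hsIco))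
      calc s ^ (n-1) * (p s * ℓ (y s)) = (s ^ (n-1) * p s) * ℓ (y s) := by ring
        _ ≤ (s ^ (n-1) * p s) * ℓ (y t) := mul_le_mul_of_nonneg_left h1 h2
    rw [mul_one_div, div_le_div_iff₀ hℓt hA]
    have hw : y' t * t ^ (n-1) = ∫ s in R₀..t, s ^ (n-1) * (p s * ℓ (y s)) := by
      rw [← hw_eq t ht]; ring
    linarith
  -- derivative of C ∘ y
  have hCd : ∀ t ∈ Icc R₀ r, HasDerivAt (fun u => C (y u)) (y' t * (1 / ℓ (y t))) t := by
    intro t ht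
    have htIco := hsub ht
    have hb : sstar < y t := hy_pos t htIco
    have hCeq : C = fun s => ∫ τ in sstar..s, 1 / ℓ τ := funext hC
    have hcontOn : ContinuousOn (fun τ => 1 / ℓ τ) (Ioi sstar) := by
      apply ContinuousOn.div continuousOn_const (hℓ_cont.mono Ioi_subset_Ici_self)
      intro x hx; exact (hℓ_pos x (le_of_lt (mem_Ioi.mp hx))).ne'
    have hint : IntervalIntegrable (fun τ => 1 / ℓ τ) volume sstar (y t) := by
      apply ContinuousOn.intervalIntegrable
      rw [uIcc_of_le hb.le]
      apply ContinuousOn.div continuousOn_const (hℓ_cont.mono Icc_subset_Ici_self)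
      intro x hx; exact (hℓ_pos x hx.1).ne'
    have hmeas : StronglyMeasurableAtFilter (fun τ => 1 / ℓ τ) (𝓝 (y t)) volume :=
      hcontOn.stronglyMeasurableAtFilter isOpen_Ioi (y t) hb
    have hca : ContinuousAt (fun τ => 1 / ℓ τ) (y t) := by
      have hc : ContinuousAt ℓ (y t) := hℓ_cont.continuousAt (Ici_mem_nhds hb)
      exact ContinuousAt.div continuousAt_const hc (hℓ_pos _ hb.le).ne'
    have hF : HasDerivAt (fun s => ∫ τ in sstar..s, 1 / ℓ τ) (1 / ℓ (y t)) (y t) :=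
      intervalIntegral.integral_hasDerivAt_right hint hmeas hca
    rw [hCeq]
    exact (hF.comp t (hyd t htIco)).congr_deriv (mul_comm _ _)
  -- FTC for C ∘ y
  have hmain : C (y r) - C (y R₀) = ∫ t in R₀..r, y' t * (1 / ℓ (y t)) := by
    rw [intervalIntegral.integral_eq_sub_of_hasDerivAt
      (fun t ht => hCd t (by rwa [uIcc_of_le hR₀r] at ht)) ?_]
    apply ContinuousOn.intervalIntegrable
    rw [uIcc_of_le hR₀r]
    exact (hy'_cont.mono hsub).mul
      (continuousOn_const.div (hℓy_cont.mono hsub)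
        (fun t ht => (hℓy_pos t (hsub ht)).ne'))
  rw [hy0] at hmain
  -- compare integrals
  have hint_lhs : IntervalIntegrable (fun t => y' t * (1 / ℓ (y t))) volume R₀ r := by
    apply ContinuousOn.intervalIntegrable
    rw [uIcc_of_le hR₀r]
    exact (hy'_cont.mono hsub).mul
      (continuousOn_const.div (hℓy_cont.mono hsub)
        (fun t ht => (hℓy_pos t (hsub ht)).ne'))
  have hint_rhs : IntervalIntegrable
      (fun t => (∫ s in R₀..t, s ^ (n-1) * p s) / t ^ (n-1)) volume R₀ r := by
    apply ContinuousOn.intervalIntegrable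
    rw [uIcc_of_le hR₀r]
    have hP : ContinuousOn (fun t => ∫ s in R₀..t, s ^ (n-1) * p s) (Icc R₀ r) := by
      have : IntegrableOn (fun s => s ^ (n-1) * p s) (uIcc R₀ r) volume := by
        rw [uIcc_of_le hR₀r]
        apply ContinuousOn.integrableOn_Icc
        exact (continuous_pow (n-1)).continuousOn.mul
          (hp_cont.mono (fun s hs => hIcoIci (hsub hs)))
      simpa [uIcc_of_le hR₀r] using intervalIntegral.continuousOn_primitive_interval this
    exact hP.div ((continuous_pow (n-1)).continuousOn)
      (fun t ht => (pow_pos (hpos t (hsub ht)) _).ne')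
  have hle2 : (∫ t in R₀..r, y' t * (1 / ℓ (y t)))
      ≤ ∫ t in R₀..r, (∫ s in R₀..t, s ^ (n-1) * p s) / t ^ (n-1) :=
    intervalIntegral.integral_mono_on hR₀r hint_lhs hint_rhs key
  linarith
end
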